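/- There exist constants $C>0$ and $\theta\in(0,1)$ such that for every $\delta>0$ and all $\bar a,\bar b\in\Sigma$ with $d_\Sigma(\bar a,\bar b)<\delta$ one has $|c_{\bar a}(i)-c_{\bar b}(i)|<C\,\theta^{1/\delta}$ for all $i\in\{1,\dots,l\}$. In particular, for each $i$ the map $\bar a\mapsto c_{\bar a}(i)$ is continuous from $(\Sigma,d_\Sigma)$ to $\mathbb R$. -/

import Mathlib

open Filter Topology

noncomputable section

/-- Product of matrices `A (a 0) * A (a 1) * ⋯ * A (a (n-1))`,
representing `A_{a_1} A_{a_2} ⋯ A_{a_n}` for the (1-indexed) sequence `ā`. -/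
def matSeq {l k : ℕ} {R : Type} [Semiring R] (A : Fin k → Matrix (Fin l) (Fin l) R) :
    (ℕ → Fin k) → ℕ → Matrix (Fin l) (Fin l) R
  | _, 0 => 1
  | a, n + 1 => A (a 0) * matSeq A (fun i => a (i + 1)) n

/-- Product `ω (a 0) * ⋯ * ω (a (n-1))`, representing `ω_{a_1} ⋯ ω_{a_n}`. -/
def prodSeq {k : ℕ} (ω : Fin k → ℝ) : (ℕ → Fin k) → ℕ → ℝ
  | _, 0 => 1
  | a, n + 1 => ω (a 0) * prodSeq ω (fun i => a (i + 1)) n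

open Classical in
/-- The metric on `Σ = {1,…,k}^ℕ`: `d(ā,b̄) = 1/L` where `L` is the least (1-indexed)
position where the sequences differ, and `0` if they are equal. -/
def dSigma {k : ℕ} (a b : ℕ → Fin k) : ℝ :=
  if h : ∃ n, a n ≠ b n then 1 / ((Nat.find h : ℝ) + 1) else 0

/-- The matrix `E^n_ā` with entries `(A^n_ā)_{ij} / (ω^n_ā V_j)`. -/
def Emat {l k : ℕ} (A : Fin k → Matrix (Fin l) (Fin l) ℝ) (ω : Fin k → ℝ) (V : Fin l → ℝ)
    (a : ℕ → Fin k) (n : ℕ) : Matrix (Fin l) (Fin l) ℝ :=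
  fun i j => matSeq A a n i j / (prodSeq ω a n * V j)

/-- The set of columns of `E^n_ā`, as vectors of `ℝ^l`. -/
def Ecols {l k : ℕ} (A : Fin k → Matrix (Fin l) (Fin l) ℝ) (ω : Fin k → ℝ) (V : Fin l → ℝ)
    (a : ℕ → Fin k) (n : ℕ) : Set (EuclideanSpace ℝ (Fin l)) :=
  {v | ∃ j : Fin l, ∀ i : Fin l, v i = Emat A ω V a n i j}

/-- `Δ^n_ā`, the convex hull in `ℝ^l` of the columns of `E^n_ā`. -/
def DeltaSet {l k : ℕ} (A : Fin k → Matrix (Fin l) (Fin l) ℝ) (ω : Fin k → ℝ) (V : Fin l → ℝ)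
    (a : ℕ → Fin k) (n : ℕ) : Set (EuclideanSpace ℝ (Fin l)) :=
  convexHull ℝ (Ecols A ω V a n)

section Aux
variable {l k : ℕ}

lemma matSeq_prefix {R : Type} [Semiring R] (A : Fin k → Matrix (Fin l) (Fin l) R) :
    ∀ (n : ℕ) (a b : ℕ → Fin k), (∀ i < n, a i = b i) → matSeq A a n = matSeq A b n := by
  intro n
  induction n with
  | zero => intro a b _; rfl
  | succ n ih =>
    intro a b h
    simp only [matSeq]
    rw [h 0 (Nat.succ_pos n), ih _ _ (fun i hi => h (i+1) (by omega))]

lemma prodSeq_prefix (ω : Fin k → ℝ) :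
    ∀ (n : ℕ) (a b : ℕ → Fin k), (∀ i < n, a i = b i) → prodSeq ω a n = prodSeq ω b n := by
  intro n
  induction n with
  | zero => intro a b _; rfl
  | succ n ih =>
    intro a b h
    simp only [prodSeq]
    rw [h 0 (Nat.succ_pos n), ih _ _ (fun i hi => h (i+1) (by omega))]

lemma matSeq_add {R : Type} [Semiring R] (A : Fin k → Matrix (Fin l) (Fin l) R) :
    ∀ (m n : ℕ) (a : ℕ → Fin k),
      matSeq A a (m + n) = matSeq A a m * matSeq A (fun i => a (i + m)) n := by
  intro m
  induction m with
  | zero => intro n a; simp [matSeq]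
  | succ m ih =>
    intro n a
    have h1 : m + 1 + n = (m + n) + 1 := by omega
    rw [h1]
    simp only [matSeq]
    rw [ih n (fun i => a (i + 1))]
    have h2 : (fun i => a (i + m + 1)) = (fun i => a (i + (m + 1))) := by
      funext i; rw [Nat.add_assoc]
    rw [mul_assoc, h2]

lemma prodSeq_add (ω : Fin k → ℝ) :
    ∀ (m n : ℕ) (a : ℕ → Fin k),
      prodSeq ω a (m + n) = prodSeq ω a m * prodSeq ω (fun i => a (i + m)) n := by
  intro m
  induction m with
  | zero => intro n a; simp [prodSeq]
  | succ m ih =>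
    intro n a
    have h1 : m + 1 + n = (m + n) + 1 := by omega
    rw [h1]
    simp only [prodSeq]
    rw [ih n (fun i => a (i + 1))]
    have h2 : (fun i => a (i + m + 1)) = (fun i => a (i + (m + 1))) := by
      funext i; rw [Nat.add_assoc]
    rw [mul_assoc, h2]

lemma matSeq_nonneg (A : Fin k → Matrix (Fin l) (Fin l) ℝ) (hA : ∀ i p q, 0 ≤ A i p q) :
    ∀ (n : ℕ) (a : ℕ → Fin k) (p q : Fin l), 0 ≤ matSeq A a n p q := by
  intro n
  induction n with
  | zero =>
    intro a p q
    simp only [matSeq, Matrix.one_apply]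
    split <;> norm_num
  | succ n ih =>
    intro a p q
    simp only [matSeq, Matrix.mul_apply]
    exact Finset.sum_nonneg fun s _ => mul_nonneg (hA _ _ _) (ih _ _ _)

lemma prodSeq_pos (ω : Fin k → ℝ) (hω : ∀ i, 0 < ω i) :
    ∀ (n : ℕ) (a : ℕ → Fin k), 0 < prodSeq ω a n := by
  intro n
  induction n with
  | zero => intro a; norm_num [prodSeq]
  | succ n ih => intro a; exact mul_pos (hω _) (ih _)

lemma matSeq_invsmul (A : Fin k → Matrix (Fin l) (Fin l) ℝ) (ω : Fin k → ℝ) :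
    ∀ (n : ℕ) (a : ℕ → Fin k),
      matSeq (fun i => (ω i)⁻¹ • A i) a n = (prodSeq ω a n)⁻¹ • matSeq A a n := by
  intro n
  induction n with
  | zero => intro a; simp [matSeq, prodSeq]
  | succ n ih =>
    intro a
    simp only [matSeq, prodSeq, ih, mul_inv]
    rw [Matrix.smul_mul, Matrix.mul_smul, smul_smul]

lemma matSeq_colsum (A : Fin k → Matrix (Fin l) (Fin l) ℝ) (ω : Fin k → ℝ) (V : Fin l → ℝ)
    (heig : ∀ i : Fin k, ∀ j : Fin l, ∑ p, V p * A i p j = ω i * V j) :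
    ∀ (n : ℕ) (a : ℕ → Fin k) (j : Fin l),
      ∑ i, V i * matSeq A a n i j = prodSeq ω a n * V j := by
  intro n
  induction n with
  | zero => intro a j; simp [matSeq, prodSeq, Matrix.one_apply]
  | succ n ih =>
    intro a j
    simp only [matSeq, prodSeq, Matrix.mul_apply]
    have : ∑ i, V i * ∑ p, A (a 0) i p * matSeq A (fun s => a (s+1)) n p j
        = ∑ p, (∑ i, V i * A (a 0) i p) * matSeq A (fun s => a (s+1)) n p j := by
      simp_rw [Finset.mul_sum, Finset.sum_mul]
      rw [Finset.sum_comm]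
      exact Finset.sum_congr rfl fun p _ => Finset.sum_congr rfl fun i _ => by ring
    rw [this]
    simp_rw [heig]
    calc ∑ p, ω (a 0) * V p * matSeq A (fun s => a (s+1)) n p j
        = ω (a 0) * ∑ p, V p * matSeq A (fun s => a (s+1)) n p j := by
          rw [Finset.mul_sum]; exact Finset.sum_congr rfl fun p _ => by ring
      _ = ω (a 0) * (prodSeq ω (fun s => a (s+1)) n * V j) := by rw [ih]
      _ = ω (a 0) * prodSeq ω (fun s => a (s+1)) n * V j := by ring

end Aux

section EmatLemmas
variable {l k : ℕ} (A : Fin k → Matrix (Fin l) (Fin l) ℝ) (ω : Fin k → ℝ) (V : Fin l → ℝ)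

lemma Emat_nonneg (hA : ∀ i p q, 0 ≤ A i p q) (hω : ∀ i, 0 < ω i) (hV : ∀ p, 0 < V p)
    (a : ℕ → Fin k) (n : ℕ) (i j : Fin l) : 0 ≤ Emat A ω V a n i j :=
  div_nonneg (matSeq_nonneg A hA n a i j) (mul_pos (prodSeq_pos ω hω n a) (hV j)).le

lemma Emat_colsum (hω : ∀ i, 0 < ω i) (hV : ∀ p, 0 < V p)
    (heig : ∀ i : Fin k, ∀ j : Fin l, ∑ p, V p * A i p j = ω i * V j)
    (a : ℕ → Fin k) (n : ℕ) (j : Fin l) : ∑ i, V i * Emat A ω V a n i j = 1 := by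
  unfold Emat
  simp_rw [mul_div_assoc']
  rw [← Finset.sum_div, matSeq_colsum A ω V heig n a j, div_self]
  exact (mul_pos (prodSeq_pos ω hω n a) (hV j)).ne'

lemma Emat_ub (hA : ∀ i p q, 0 ≤ A i p q) (hω : ∀ i, 0 < ω i) (hV : ∀ p, 0 < V p)
    (heig : ∀ i : Fin k, ∀ j : Fin l, ∑ p, V p * A i p j = ω i * V j)
    (a : ℕ → Fin k) (n : ℕ) (i j : Fin l) : Emat A ω V a n i j ≤ (V i)⁻¹ := by
  have h1 : V i * Emat A ω V a n i j ≤ 1 := by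
    rw [← Emat_colsum A ω V hω hV heig a n j]
    exact Finset.single_le_sum
      (fun p _ => mul_nonneg (hV p).le (Emat_nonneg A ω V hA hω hV a n p j))
      (Finset.mem_univ i)
  rw [← one_div]
  rw [le_div_iff₀ (hV i)]
  linarith [h1]

lemma Emat_rec (hω : ∀ i, 0 < ω i) (hV : ∀ p, 0 < V p)
    (a : ℕ → Fin k) (m t : ℕ) (i j : Fin l) :
    Emat A ω V a (m + t) i j
      = ∑ p, Emat A ω V a m i p * (V p * Emat A ω V (fun s => a (s + m)) t p j) := by
  unfold Emat
  rw [matSeq_add, prodSeq_add, Matrix.mul_apply, Finset.sum_div]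
  refine Finset.sum_congr rfl fun p _ => ?_
  have h1 := (prodSeq_pos ω hω m a).ne'
  have h2 := (prodSeq_pos ω hω t (fun s => a (s + m))).ne'
  have h3 := (hV p).ne'
  have h4 := (hV j).ne'
  field_simp

end EmatLemmas

section Osc
variable {l k : ℕ} (hl : 0 < l) (A : Fin k → Matrix (Fin l) (Fin l) ℝ) (ω : Fin k → ℝ)
  (V : Fin l → ℝ)

def colSup (a : ℕ → Fin k) (n : ℕ) (i : Fin l) : ℝ :=
  Finset.univ.sup' ⟨⟨0, hl⟩, Finset.mem_univ _⟩ (fun j => Emat A ω V a n i j)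

def colInf (a : ℕ → Fin k) (n : ℕ) (i : Fin l) : ℝ :=
  Finset.univ.inf' ⟨⟨0, hl⟩, Finset.mem_univ _⟩ (fun j => Emat A ω V a n i j)

variable (hA : ∀ i p q, 0 ≤ A i p q) (hω : ∀ i, 0 < ω i) (hV : ∀ p, 0 < V p)
  (heig : ∀ i : Fin k, ∀ j : Fin l, ∑ p, V p * A i p j = ω i * V j)

include hA hω hV heig in
lemma colMix (a : ℕ → Fin k) (m t : ℕ) (i j : Fin l) :
    colInf hl A ω V a m i ≤ Emat A ω V a (m + t) i j ∧
      Emat A ω V a (m + t) i j ≤ colSup hl A ω V a m i := by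
  have hw : ∀ p : Fin l, 0 ≤ V p * Emat A ω V (fun s => a (s + m)) t p j :=
    fun p => mul_nonneg (hV p).le (Emat_nonneg A ω V hA hω hV _ t p j)
  have hws : ∑ p, V p * Emat A ω V (fun s => a (s + m)) t p j = 1 :=
    Emat_colsum A ω V hω hV heig _ t j
  rw [Emat_rec A ω V hω hV a m t i j]
  constructor
  · calc colInf hl A ω V a m i = colInf hl A ω V a m i * 1 := (mul_one _).symm
      _ = ∑ p, colInf hl A ω V a m i * (V p * Emat A ω V (fun s => a (s + m)) t p j) := by
          rw [← Finset.mul_sum, hws]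
      _ ≤ _ := Finset.sum_le_sum fun p _ => mul_le_mul_of_nonneg_right
          (Finset.inf'_le _ (Finset.mem_univ p)) (hw p)
  · calc _ ≤ ∑ p, colSup hl A ω V a m i * (V p * Emat A ω V (fun s => a (s + m)) t p j) :=
        Finset.sum_le_sum fun p _ => mul_le_mul_of_nonneg_right
          (Finset.le_sup' _ (Finset.mem_univ p)) (hw p)
      _ = colSup hl A ω V a m i * 1 := by rw [← Finset.mul_sum, hws]
      _ = _ := mul_one _

include hA hω hV heig in
lemma colContract (η : ℝ) (hη : 0 ≤ η) (N : ℕ)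
    (hwlb : ∀ (b : ℕ → Fin k) (p q : Fin l), η ≤ V p * Emat A ω V b N p q)
    (a : ℕ → Fin k) (m : ℕ) (i : Fin l) :
    colSup hl A ω V a (m + N) i - colInf hl A ω V a (m + N) i
      ≤ (1 - 2 * η) * (colSup hl A ω V a m i - colInf hl A ω V a m i) := by
  set S := colSup hl A ω V a m i with hS
  set I := colInf hl A ω V a m i with hI
  have hne : (Finset.univ : Finset (Fin l)).Nonempty := ⟨⟨0, hl⟩, Finset.mem_univ _⟩
  obtain ⟨p0, -, hp0⟩ := Finset.exists_mem_eq_inf' hne (fun j => Emat A ω V a m i j)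
  obtain ⟨p1, -, hp1⟩ := Finset.exists_mem_eq_sup' hne (fun j => Emat A ω V a m i j)
  have hEle : ∀ p, Emat A ω V a m i p ≤ S := fun p => Finset.le_sup' _ (Finset.mem_univ p)
  have hEge : ∀ p, I ≤ Emat A ω V a m i p := fun p => Finset.inf'_le _ (Finset.mem_univ p)
  have hID : I ≤ S := le_trans (hEge p0) (hEle p0)
  have key : ∀ j : Fin l,
      Emat A ω V a (m + N) i j ≤ S - η * (S - I) ∧
      I + η * (S - I) ≤ Emat A ω V a (m + N) i j := by
    intro j
    set w : Fin l → ℝ := fun p => V p * Emat A ω V (fun s => a (s + m)) N p j with hwdef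
    have hw0 : ∀ p, 0 ≤ w p :=
      fun p => mul_nonneg (hV p).le (Emat_nonneg A ω V hA hω hV _ N p j)
    have hwη : ∀ p, η ≤ w p := fun p => hwlb _ p j
    have hws : ∑ p, w p = 1 := Emat_colsum A ω V hω hV heig _ N j
    rw [Emat_rec A ω V hω hV a m N i j]
    constructor
    · have h1 : η * (S - I) ≤ ∑ p, (S - Emat A ω V a m i p) * w p := by
        have hIp0 : I = Emat A ω V a m i p0 := hp0
        have step : η * (S - I) ≤ (S - Emat A ω V a m i p0) * w p0 := by
          rw [← hIp0]
          nlinarith [hwη p0, hID]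
        refine step.trans (Finset.single_le_sum
          (f := fun p => (S - Emat A ω V a m i p) * w p)
          (fun p _ => mul_nonneg (by linarith [hEle p]) (hw0 p)) (Finset.mem_univ p0))
      have h2 : (∑ p, Emat A ω V a m i p * w p) + ∑ p, (S - Emat A ω V a m i p) * w p = S := by
        rw [← Finset.sum_add_distrib]
        have : ∀ p ∈ Finset.univ, Emat A ω V a m i p * w p + (S - Emat A ω V a m i p) * w p
            = S * w p := fun p _ => by ring
        rw [Finset.sum_congr rfl this, ← Finset.mul_sum, hws, mul_one]
      linarith
    · have h1 : η * (S - I) ≤ ∑ p, (Emat A ω V a m i p - I) * w p := by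
        have hSp1 : S = Emat A ω V a m i p1 := hp1
        have step : η * (S - I) ≤ (Emat A ω V a m i p1 - I) * w p1 := by
          rw [← hSp1]
          nlinarith [hwη p1, hID]
        refine step.trans (Finset.single_le_sum
          (f := fun p => (Emat A ω V a m i p - I) * w p)
          (fun p _ => mul_nonneg (by linarith [hEge p]) (hw0 p)) (Finset.mem_univ p1))
      have h2 : (∑ p, Emat A ω V a m i p * w p) - ∑ p, (Emat A ω V a m i p - I) * w p = I := by
        rw [← Finset.sum_sub_distrib]
        have : ∀ p ∈ Finset.univ, Emat A ω V a m i p * w p - (Emat A ω V a m i p - I) * w p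
            = I * w p := fun p _ => by ring
        rw [Finset.sum_congr rfl this, ← Finset.mul_sum, hws, mul_one]
      linarith
  have hsup : colSup hl A ω V a (m + N) i ≤ S - η * (S - I) :=
    Finset.sup'_le _ _ fun j _ => (key j).1
  have hinf : I + η * (S - I) ≤ colInf hl A ω V a (m + N) i :=
    Finset.le_inf' _ _ fun j _ => (key j).2
  nlinarith [hsup, hinf]

end Osc

/-- Hölder-type continuity of `ā ↦ c_ā(i)`: if `d_Σ(ā,b̄) < δ` then
`|c_ā(i) - c_b̄(i)| < C θ^(1/δ)`; in particular each `ā ↦ c_ā(i)` is continuous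
from `(Σ, d_Σ)` to `ℝ`. -/
theorem freq_limit_continuous {l k : ℕ} (hl : 0 < l) (hk : 0 < k)
    (A : Fin k → Matrix (Fin l) (Fin l) ℝ) (ω : Fin k → ℝ) (V : Fin l → ℝ)
    (hA : ∀ i : Fin k, ∀ p q : Fin l, 0 ≤ A i p q)
    (hω : ∀ i, 0 < ω i) (hV : ∀ p, 0 < V p)
    (heig : ∀ i : Fin k, ∀ j : Fin l, ∑ p, V p * A i p j = ω i * V j)
    (N : ℕ) (hN : 0 < N)
    (hpos : ∀ (b : ℕ → Fin k) (p q : Fin l),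
      0 < matSeq (fun i => (ω i)⁻¹ • A i) b N p q)
    (c : (ℕ → Fin k) → Fin l → ℝ)
    (hc : ∀ (a : ℕ → Fin k) (i j : Fin l),
      Tendsto (fun n => Emat A ω V a n i j) atTop (nhds (c a i))) :
    (∃ C : ℝ, 0 < C ∧ ∃ θ : ℝ, 0 < θ ∧ θ < 1 ∧
      ∀ δ : ℝ, 0 < δ → ∀ a b : ℕ → Fin k, dSigma a b < δ →
        ∀ i : Fin l, |c a i - c b i| < C * θ ^ (1 / δ)) ∧
    ∀ (i : Fin l) (a : ℕ → Fin k), ∀ ε : ℝ, 0 < ε →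
      ∃ δ : ℝ, 0 < δ ∧ ∀ b : ℕ → Fin k, dSigma a b < δ → |c a i - c b i| < ε := by
  have hne : (Finset.univ : Finset (Fin l)).Nonempty := ⟨⟨0, hl⟩, Finset.mem_univ _⟩
  have hne2 : (Finset.univ : Finset (Fin l × Fin l)).Nonempty :=
    ⟨(⟨0, hl⟩, ⟨0, hl⟩), Finset.mem_univ _⟩
  have hne3 : (Finset.univ : Finset (Fin N → Fin k)).Nonempty :=
    ⟨fun _ => ⟨0, hk⟩, Finset.mem_univ _⟩
  set Vmin := Finset.univ.inf' hne V with hVmindef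
  set Vmax := Finset.univ.sup' hne V with hVmaxdef
  have hVmin0 : 0 < Vmin := (Finset.lt_inf'_iff hne).mpr fun b _ => hV b
  have hVminle : ∀ p, Vmin ≤ V p := fun p => Finset.inf'_le _ (Finset.mem_univ p)
  have hVlemax : ∀ p, V p ≤ Vmax := fun p => Finset.le_sup' _ (Finset.mem_univ p)
  have hVmax0 : 0 < Vmax := lt_of_lt_of_le hVmin0 (le_trans (hVminle ⟨0, hl⟩) (hVlemax _))
  -- uniform positive lower bound on normalized N-step products
  set g : (Fin N → Fin k) → ℝ := fun t => Finset.univ.inf' hne2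
    (fun pq : Fin l × Fin l => matSeq (fun i => (ω i)⁻¹ • A i)
      (fun n => if h : n < N then t ⟨n, h⟩ else t ⟨0, hN⟩) N pq.1 pq.2) with hgdef
  set η0 := Finset.univ.inf' hne3 g with hη0def
  have hη00 : 0 < η0 := by
    rw [hη0def]
    refine (Finset.lt_inf'_iff hne3).mpr fun t _ => ?_
    exact (Finset.lt_inf'_iff hne2).mpr fun pq _ => hpos _ _ _
  have hη0le : ∀ (b : ℕ → Fin k) (p q : Fin l),
      η0 ≤ matSeq (fun i => (ω i)⁻¹ • A i) b N p q := by
    intro b p q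
    set t : Fin N → Fin k := fun s => b s.val with htdef
    have heq : matSeq (fun i => (ω i)⁻¹ • A i) b N
        = matSeq (fun i => (ω i)⁻¹ • A i)
            (fun n => if h : n < N then t ⟨n, h⟩ else t ⟨0, hN⟩) N := by
      refine matSeq_prefix _ N _ _ fun s hs => ?_
      simp [htdef, dif_pos hs]
    rw [heq]
    exact le_trans (Finset.inf'_le g (Finset.mem_univ t))
      (Finset.inf'_le _ (Finset.mem_univ (p, q)))
  -- lower bound on mixing weights
  have hwlb : ∀ (b : ℕ → Fin k) (p q : Fin l),
      Vmin * η0 / Vmax ≤ V p * Emat A ω V b N p q := by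
    intro b p q
    have hE : Emat A ω V b N p q
        = matSeq (fun i => (ω i)⁻¹ • A i) b N p q / V q := by
      unfold Emat
      rw [matSeq_invsmul, Matrix.smul_apply, smul_eq_mul]
      field_simp [(prodSeq_pos ω hω N b).ne']
    rw [hE, mul_div_assoc']
    refine div_le_div₀ (mul_nonneg (hV p).le (le_trans hη00.le (hη0le b p q)))
      (mul_le_mul (hVminle p) (hη0le b p q) hη00.le (hV p).le) (hV q) (hVlemax q)
  set η : ℝ := min (Vmin * η0 / Vmax) (1/4) with hηdef
  have hη0' : 0 < η := lt_min (div_pos (mul_pos hVmin0 hη00) hVmax0) (by norm_num)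
  have hηle : η ≤ 1/4 := min_le_right _ _
  have hηw : ∀ (b : ℕ → Fin k) (p q : Fin l), η ≤ V p * Emat A ω V b N p q :=
    fun b p q => le_trans (min_le_left _ _) (hwlb b p q)
  set θ0 : ℝ := 1 - 2 * η with hθ0def
  have hθ00 : 0 < θ0 := by rw [hθ0def]; linarith
  have hθ01 : θ0 < 1 := by rw [hθ0def]; linarith
  -- oscillation decay
  have hosc : ∀ (a : ℕ → Fin k) (q r : ℕ) (i : Fin l),
      colSup hl A ω V a (q * N + r) i - colInf hl A ω V a (q * N + r) i
        ≤ θ0 ^ q * Vmin⁻¹ := by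
    intro a q
    induction q with
    | zero =>
      intro r i
      simp only [pow_zero, one_mul, zero_mul, zero_add]
      have h1 : colSup hl A ω V a r i ≤ Vmin⁻¹ := by
        refine Finset.sup'_le _ _ fun j _ => le_trans (Emat_ub A ω V hA hω hV heig a r i j) ?_
        exact inv_anti₀ hVmin0 (hVminle i)
      have h2 : 0 ≤ colInf hl A ω V a r i :=
        Finset.le_inf' _ _ fun j _ => Emat_nonneg A ω V hA hω hV a r i j
      linarith
    | succ q ih =>
      intro r i
      have h3 : (q + 1) * N + r = (q * N + r) + N := by ring
      rw [h3]
      calc colSup hl A ω V a ((q * N + r) + N) i - colInf hl A ω V a ((q * N + r) + N) i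
          ≤ (1 - 2 * η) * (colSup hl A ω V a (q * N + r) i - colInf hl A ω V a (q * N + r) i) :=
            colContract hl A ω V hA hω hV heig η hη0'.le N hηw a (q * N + r) i
        _ ≤ θ0 * (θ0 ^ q * Vmin⁻¹) := by
            rw [← hθ0def]; exact mul_le_mul_of_nonneg_left (ih r i) hθ00.le
        _ = θ0 ^ (q + 1) * Vmin⁻¹ := by ring
  -- the limit lies in the column interval at every stage
  have hcbound : ∀ (a : ℕ → Fin k) (m : ℕ) (i : Fin l),
      colInf hl A ω V a m i ≤ c a i ∧ c a i ≤ colSup hl A ω V a m i := by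
    intro a m i
    have hup : ∀ᶠ n in atTop, Emat A ω V a n i ⟨0, hl⟩ ≤ colSup hl A ω V a m i := by
      filter_upwards [eventually_ge_atTop m] with n hn
      have hnm : n = m + (n - m) := by omega
      rw [hnm]
      exact (colMix hl A ω V hA hω hV heig a m (n - m) i ⟨0, hl⟩).2
    have hdn : ∀ᶠ n in atTop, colInf hl A ω V a m i ≤ Emat A ω V a n i ⟨0, hl⟩ := by
      filter_upwards [eventually_ge_atTop m] with n hn
      have hnm : n = m + (n - m) := by omega
      rw [hnm]
      exact (colMix hl A ω V hA hω hV heig a m (n - m) i ⟨0, hl⟩).1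
    exact ⟨ge_of_tendsto (hc a i ⟨0, hl⟩) hdn, le_of_tendsto (hc a i ⟨0, hl⟩) hup⟩
  -- main Hölder-type bound
  have hmain : ∀ (a b : ℕ → Fin k) (m : ℕ), (∀ s < m, a s = b s) → ∀ i : Fin l,
      |c a i - c b i| ≤ θ0 ^ (m / N) * Vmin⁻¹ := by
    intro a b m h i
    have hEab : Emat A ω V a m = Emat A ω V b m := by
      funext p q
      unfold Emat
      rw [matSeq_prefix A m a b h, prodSeq_prefix ω m a b h]
    have hSab : colSup hl A ω V a m i = colSup hl A ω V b m i := by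
      unfold colSup; rw [hEab]
    have hIab : colInf hl A ω V a m i = colInf hl A ω V b m i := by
      unfold colInf; rw [hEab]
    have ha := hcbound a m i
    have hb := hcbound b m i
    have hosc' := hosc a (m / N) (m % N) i
    rw [Nat.div_add_mod'] at hosc'
    rw [← hSab, ← hIab] at hb
    rw [abs_sub_le_iff]
    exact ⟨by linarith [ha.1, ha.2, hb.1, hb.2], by linarith [ha.1, ha.2, hb.1, hb.2]⟩
  -- assemble the constants
  have hNpos : (0:ℝ) < (N:ℝ) := by exact_mod_cast hN
  have main : ∀ δ : ℝ, 0 < δ → ∀ a b : ℕ → Fin k, dSigma a b < δ →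
      ∀ i : Fin l, |c a i - c b i| < (θ0⁻¹ * Vmin⁻¹) * (θ0 ^ ((N:ℝ)⁻¹)) ^ (1/δ) := by
    intro δ hδ a b hd i
    have hrpos : 0 < (θ0 ^ ((N:ℝ)⁻¹)) ^ (1/δ) :=
      Real.rpow_pos_of_pos (Real.rpow_pos_of_pos hθ00 _) _
    by_cases hab : ∃ n, a n ≠ b n
    · set L := Nat.find hab with hLdef
      have hdval : dSigma a b = 1 / ((L:ℝ) + 1) := by
        rw [dSigma, dif_pos hab]
      have hLpos : (0:ℝ) < (L:ℝ) + 1 := by positivity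
      have hLd : 1 / δ < (L:ℝ) + 1 := by
        rw [hdval] at hd
        rw [div_lt_iff₀ hLpos] at hd
        rw [div_lt_iff₀ hδ]
        nlinarith
      have hagree : ∀ s < L, a s = b s := fun s hs => by
        by_contra hne'
        exact Nat.find_min hab hs hne'
      have h1 : |c a i - c b i| ≤ θ0 ^ (L / N) * Vmin⁻¹ := hmain a b L hagree i
      -- compare exponents
      have hcast : ((L + 1 : ℝ)) / (N:ℝ) - 1 ≤ ((L / N : ℕ) : ℝ) := by
        have h5 : L < N * (L / N) + N := by
          have h6 := Nat.mod_lt L hN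
          have h7 := Nat.div_add_mod L N
          omega
        have h8 : (L:ℝ) + 1 ≤ (N:ℝ) * ((L / N : ℕ) : ℝ) + N := by exact_mod_cast h5
        rw [sub_le_iff_le_add, div_le_iff₀ hNpos]
        nlinarith
      have h2 : θ0 ^ (L / N) ≤ θ0 ^ (((L:ℝ) + 1) / (N:ℝ) - 1) := by
        rw [← Real.rpow_natCast θ0 (L / N)]
        exact Real.rpow_le_rpow_of_exponent_ge hθ00 hθ01.le hcast
      have h3 : θ0 ^ (((L:ℝ) + 1) / (N:ℝ) - 1)
          = θ0 ^ (((L:ℝ) + 1) / (N:ℝ)) * θ0⁻¹ := by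
        rw [Real.rpow_sub hθ00, Real.rpow_one, div_eq_mul_inv]
      have h4 : θ0 ^ (((L:ℝ) + 1) / (N:ℝ)) < θ0 ^ ((1/δ) / (N:ℝ)) := by
        refine Real.rpow_lt_rpow_of_exponent_gt hθ00 hθ01 ?_
        gcongr
      have h6 : (θ0 ^ ((N:ℝ)⁻¹)) ^ (1/δ) = θ0 ^ ((1/δ) / (N:ℝ)) := by
        rw [← Real.rpow_mul hθ00.le]
        congr 1
        ring
      calc |c a i - c b i| ≤ θ0 ^ (L / N) * Vmin⁻¹ := h1
        _ ≤ (θ0 ^ (((L:ℝ) + 1) / (N:ℝ)) * θ0⁻¹) * Vmin⁻¹ :=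
            mul_le_mul_of_nonneg_right (h2.trans_eq h3) (by positivity)
        _ < (θ0 ^ ((1/δ) / (N:ℝ)) * θ0⁻¹) * Vmin⁻¹ := by
            have := mul_lt_mul_of_pos_right h4 (inv_pos.mpr hθ00)
            exact mul_lt_mul_of_pos_right this (inv_pos.mpr hVmin0)
        _ = (θ0⁻¹ * Vmin⁻¹) * (θ0 ^ ((N:ℝ)⁻¹)) ^ (1/δ) := by rw [h6]; ring
    · have hceq : c a = c b := by
        push_neg at hab
        have : a = b := funext hab
        rw [this]
      rw [hceq, sub_self, abs_zero]
      exact mul_pos (mul_pos (inv_pos.mpr hθ00) (inv_pos.mpr hVmin0)) hrpos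
  have hCpos : 0 < θ0⁻¹ * Vmin⁻¹ := by positivity
  have hθp : 0 < θ0 ^ ((N:ℝ)⁻¹) := Real.rpow_pos_of_pos hθ00 _
  have hθ1 : θ0 ^ ((N:ℝ)⁻¹) < 1 :=
    Real.rpow_lt_one hθ00.le hθ01 (by positivity)
  refine ⟨⟨θ0⁻¹ * Vmin⁻¹, hCpos, θ0 ^ ((N:ℝ)⁻¹), hθp, hθ1, main⟩, ?_⟩
  intro i a ε hε
  obtain ⟨n, hn⟩ := exists_pow_lt_of_lt_one (div_pos hε hCpos) hθ1
  refine ⟨1/((n:ℝ)+1), by positivity, fun b hb => ?_⟩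
  have h := main (1/((n:ℝ)+1)) (by positivity) a b hb i
  have hexp : (θ0 ^ ((N:ℝ)⁻¹)) ^ ((1:ℝ) / (1/((n:ℝ)+1)))
      = (θ0 ^ ((N:ℝ)⁻¹)) ^ (n+1) := by
    rw [one_div_one_div, show ((n:ℝ)+1) = ((n+1:ℕ):ℝ) by push_cast; ring,
      Real.rpow_natCast]
  rw [hexp] at h
  have hle : (θ0 ^ ((N:ℝ)⁻¹)) ^ (n+1) ≤ (θ0 ^ ((N:ℝ)⁻¹)) ^ n :=
    pow_le_pow_of_le_one hθp.le hθ1.le (Nat.le_succ n)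
  have hfin : (θ0⁻¹ * Vmin⁻¹) * (θ0 ^ ((N:ℝ)⁻¹)) ^ n < ε := by
    have := mul_lt_mul_of_pos_left hn hCpos
    rwa [mul_div_cancel₀ _ hCpos.ne'] at this
  calc |c a i - c b i| < (θ0⁻¹ * Vmin⁻¹) * (θ0 ^ ((N:ℝ)⁻¹)) ^ (n+1) := h
    _ ≤ (θ0⁻¹ * Vmin⁻¹) * (θ0 ^ ((N:ℝ)⁻¹)) ^ n :=
        mul_le_mul_of_nonneg_left hle hCpos.le
    _ < ε := hfin

end
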